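/- Suppose x, a₁, a₂, b₁, b₂ are real numbers with x, a₁, a₂, b₁, b₂ > 0, b₁² ≥ a₁, b₂² ≥ a₂, and x ≥ max{a₁/b₁, a₂/b₂}. Then x + (a₁ + a₂)/(b₁ + b₂) ≥ max{ (x² + a₁)/(x + b₁) + a₂/b₂ , (x² + a₂)/(x + b₂) + a₁/b₁ }. -/
import Mathlib

lemma key13 (x a₁ a₂ b₁ b₂ : ℝ) (hx : 0 < x) (ha₁ : 0 < a₁) (ha₂ : 0 < a₂)
    (hb₁ : 0 < b₁) (hb₂ : 0 < b₂) (h₂ : a₂ ≤ b₂ ^ 2)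
    (hx1 : a₁ ≤ x * b₁) (hx2 : a₂ ≤ x * b₂) :
    (x ^ 2 + a₁) / (x + b₁) + a₂ / b₂ ≤ x + (a₁ + a₂) / (b₁ + b₂) := by
  have hxb : (0:ℝ) < x + b₁ := by linarith
  have hS : (0:ℝ) < b₁ + b₂ := by linarith
  rw [← sub_nonneg]
  have hD : x + (a₁ + a₂) / (b₁ + b₂) - ((x ^ 2 + a₁) / (x + b₁) + a₂ / b₂)
      = (b₂ * (b₁ + b₂) * (x * b₁ - a₁) + (x + b₁) * (a₁ * b₂ - a₂ * b₁))
        / ((b₁ + b₂) * (x + b₁) * b₂) := by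
    field_simp
    ring
  rw [hD]
  apply div_nonneg _ (by positivity)
  rcases le_or_gt (a₂ * b₁) (a₁ * b₂) with hc | hc
  · nlinarith [mul_nonneg (mul_nonneg hb₂.le hS.le) (sub_nonneg.mpr hx1),
      mul_nonneg hxb.le (sub_nonneg.mpr hc)]
  · have hc' : 0 ≤ a₂ * b₁ - a₁ * b₂ := by linarith
    have hslope : 0 ≤ b₁ * b₂ * (b₁ + b₂) - (a₂ * b₁ - a₁ * b₂) := by nlinarith [mul_nonneg hb₁.le (sub_nonneg.mpr h₂), mul_pos ha₁ hb₂, mul_pos (mul_pos hb₁ hb₁) hb₂]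
    nlinarith [mul_nonneg hc' (sub_nonneg.mpr h₂),
      mul_nonneg (sub_nonneg.mpr hx2) hslope, hb₂]

theorem statement13 (x a₁ a₂ b₁ b₂ : ℝ) (hx : 0 < x) (ha₁ : 0 < a₁) (ha₂ : 0 < a₂)
    (hb₁ : 0 < b₁) (hb₂ : 0 < b₂) (h₁ : a₁ ≤ b₁ ^ 2) (h₂ : a₂ ≤ b₂ ^ 2)
    (hxm : max (a₁ / b₁) (a₂ / b₂) ≤ x) :
    max ((x ^ 2 + a₁) / (x + b₁) + a₂ / b₂) ((x ^ 2 + a₂) / (x + b₂) + a₁ / b₁)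
      ≤ x + (a₁ + a₂) / (b₁ + b₂) := by
  rw [max_le_iff] at hxm
  have hx1 : a₁ ≤ x * b₁ := by rw [div_le_iff₀ hb₁] at hxm; exact hxm.1
  have hx2 : a₂ ≤ x * b₂ := by rw [div_le_iff₀ hb₂] at hxm; exact hxm.2
  apply max_le
  · exact key13 x a₁ a₂ b₁ b₂ hx ha₁ ha₂ hb₁ hb₂ h₂ hx1 hx2
  · have := key13 x a₂ a₁ b₂ b₁ hx ha₂ ha₁ hb₂ hb₁ h₁ hx2 hx1
    calc (x ^ 2 + a₂) / (x + b₂) + a₁ / b₁ ≤ x + (a₂ + a₁) / (b₂ + b₁) := this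
      _ = x + (a₁ + a₂) / (b₁ + b₂) := by ring_nf
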